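/- Let F be a field and f(t) = t^n + c_{n-1}t^{n-1} + ... + c_0. Let d_1,...,d_{n-1} ∈ F be arbitrary, set d_n = -c_{n-1} - d_1 - ... - d_{n-1}, and define b_k = -∑_{i=k-1}^{n} c_i · h_{i-k+1}(d_1,...,d_k) for k = 1,...,n-1, where c_n = 1 and h_r denotes the complete homogeneous symmetric polynomial of degree r. Then the n×n matrix A with diagonal (d_1,...,d_n), subdiagonal entries 1, last column (b_1,...,b_{n-1},d_n), and zeros elsewhere satisfies det(tI_n - A) = f(t). -/
import Mathlib


open Polynomial

/-- `hfun d r k` is the complete homogeneous symmetric polynomial of degree `r`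
evaluated at the first `k` values `d 0, …, d (k-1)`:
`h_r(d_1, …, d_k)` with one-indexed variables `d_i = d (i-1)`. -/
def hfun {F : Type*} [CommRing F] (d : ℕ → F) : ℕ → ℕ → F
  | 0, _ => 1
  | _ + 1, 0 => 0
  | r + 1, k + 1 => hfun d (r + 1) k + d k * hfun d r (k + 1)
  termination_by r k => (r, k)

/-- The matrix with diagonal `d 0, …, d (n-1)`, subdiagonal entries `1`,
last column entries `b` above the diagonal, and zeros elsewhere. -/
def matA {F : Type*} [Field F] (n : ℕ) (d : ℕ → F) (b : Fin (n - 1) → F) :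
    Matrix (Fin n) (Fin n) F :=
  Matrix.of fun i j =>
    if i = j then d i
    else if (i : ℕ) = (j : ℕ) + 1 then 1
    else if (j : ℕ) = n - 1 then (if h : (i : ℕ) < n - 1 then b ⟨i, h⟩ else 0)
    else 0

section Det
variable {F : Type*} [Field F]

lemma matA_submatrix (n : ℕ) (d : ℕ → F) (b : Fin (n + 1) → F) :
    (matA (n + 2) d b).submatrix Fin.succ Fin.succ
      = matA (n + 1) (fun i => d (i + 1)) (fun k => b k.succ) := by
  ext i j
  simp only [matA, Matrix.submatrix_apply, Matrix.of_apply, Fin.succ_inj, Fin.val_succ,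
    Nat.add_sub_cancel]
  split_ifs <;> first | rfl | (exfalso; omega) | (congr 1; exact Fin.ext rfl)

lemma charmatrix_submatrix_succ (n : ℕ) (M : Matrix (Fin (n+2)) (Fin (n+2)) F) :
    (Matrix.charmatrix M).submatrix Fin.succ Fin.succ
      = Matrix.charmatrix (M.submatrix Fin.succ Fin.succ) := by
  ext i j
  simp [Matrix.charmatrix_apply, Matrix.diagonal_apply, Fin.succ_inj]

lemma charpoly_matA_succ (n : ℕ) (d : ℕ → F) (b : Fin (n + 1) → F) :
    (matA (n + 2) d b).charpoly
      = (X - C (d 0)) * (matA (n + 1) (fun i => d (i + 1)) (fun k => b k.succ)).charpoly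
        - C (b 0) := by
  set M := matA (n + 2) d b with hM
  rw [Matrix.charpoly, Matrix.det_succ_row_zero]
  have hlast : (0 : Fin (n+2)) ≠ Fin.last (n+1) := by
    simp [Fin.ext_iff]
  have hsub : ({0, Fin.last (n+1)} : Finset (Fin (n+2))) ⊆ Finset.univ := by
    simp
  rw [← Finset.sum_subset hsub ?_]
  · rw [Finset.sum_pair hlast]
    have e00 : M.charmatrix 0 0 = X - C (d 0) := by
      simp [Matrix.charmatrix_apply, hM, matA]
    have e0l : M.charmatrix 0 (Fin.last (n+1)) = - C (b 0) := by
      have h1 : (0 : Fin (n+2)) ≠ Fin.last (n+1) := hlast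
      simp [Matrix.charmatrix_apply, hM, matA, Matrix.diagonal_apply, h1, Fin.last,
        Fin.ext_iff]
    -- first minor
    have m0 : (M.charmatrix.submatrix Fin.succ ((0 : Fin (n+2)).succAbove)).det
        = (matA (n + 1) (fun i => d (i + 1)) (fun k => b k.succ)).charpoly := by
      rw [Fin.succAbove_zero, charmatrix_submatrix_succ, hM, matA_submatrix]
      rfl
    -- last minor
    have ml : (M.charmatrix.submatrix Fin.succ ((Fin.last (n+1)).succAbove)).det
        = (-1) ^ (n+1) := by
      rw [Fin.succAbove_last]
      have htri : (M.charmatrix.submatrix Fin.succ Fin.castSucc).BlockTriangular id := by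
        intro i j hij
        have hij' : (j : ℕ) < (i : ℕ) := hij
        have hne : (i.succ : Fin (n+2)) ≠ j.castSucc := by
          simp [Fin.ext_iff]; omega
        have c2 : ¬ ((i.succ : Fin (n+2)) : ℕ) = ((j.castSucc : Fin (n+2)) : ℕ) + 1 := by
          simp [Fin.val_succ]; omega
        have c3 : ¬ ((j.castSucc : Fin (n+2)) : ℕ) = n + 2 - 1 := by
          simp; omega
        simp only [Matrix.submatrix_apply, Matrix.charmatrix_apply,
          Matrix.diagonal_apply, if_neg hne, hM, matA, Matrix.of_apply]
        rw [if_neg c2, if_neg c3]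
        simp
      rw [Matrix.det_of_upperTriangular htri]
      have hdiag : ∀ i : Fin (n+1),
          (M.charmatrix.submatrix Fin.succ Fin.castSucc) i i = -1 := by
        intro i
        have hne : (i.succ : Fin (n+2)) ≠ i.castSucc := by
          simp [Fin.ext_iff]
        have c2 : ((i.succ : Fin (n+2)) : ℕ) = ((i.castSucc : Fin (n+2)) : ℕ) + 1 := by
          simp
        have c3 : ¬ ((i.castSucc : Fin (n+2)) : ℕ) = n + 2 - 1 := by
          simp; omega
        simp only [Matrix.submatrix_apply, Matrix.charmatrix_apply,
          Matrix.diagonal_apply, if_neg hne, hM, matA, Matrix.of_apply]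
        rw [if_pos c2]
        simp
      rw [Finset.prod_congr rfl (fun i _ => hdiag i)]
      simp
    rw [e00, e0l, m0, ml]
    have h4 : ((-1 : F[X])) ^ (n+1) * ((-1 : F[X])) ^ (n+1) = 1 := by
      rw [← pow_add]
      exact Even.neg_one_pow ⟨n + 1, by ring⟩
    simp only [Fin.val_zero, pow_zero, one_mul, Fin.val_last]
    linear_combination (-(C (b 0))) * h4
  · intro j _ hj
    have hj0 : j ≠ 0 := by intro h; apply hj; simp [h]
    have hjl : j ≠ Fin.last (n+1) := by intro h; apply hj; simp [h]
    have : M.charmatrix 0 j = 0 := by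
      have h1 : (0 : Fin (n+2)) ≠ j := fun h => hj0 h.symm
      have h2 : ¬ ((0 : Fin (n+2)) : ℕ) = (j : ℕ) + 1 := by simp
      have h3 : ¬ ((j : ℕ) = n + 1) := by
        intro h; apply hjl; apply Fin.ext; simp [Fin.val_last]; omega
      simp [Matrix.charmatrix_apply, Matrix.diagonal_apply, h1, hM, matA, h2, h3]
    rw [this]
    ring

lemma charpoly_matA_one (d : ℕ → F) (b : Fin 0 → F) :
    (matA 1 d b).charpoly = X - C (d 0) := by
  rw [Matrix.charpoly, Matrix.det_fin_one, Matrix.charmatrix_apply]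
  simp [matA]

lemma charpoly_matA (n : ℕ) (d : ℕ → F) (b : Fin n → F) :
    (matA (n + 1) d b).charpoly
      = ∏ i ∈ Finset.range (n + 1), (X - C (d i))
        - ∑ k : Fin n, C (b k) * ∏ i ∈ Finset.range (k : ℕ), (X - C (d i)) := by
  induction n generalizing d with
  | zero => simp [charpoly_matA_one]
  | succ m ih =>
    rw [charpoly_matA_succ, ih]
    rw [Fin.sum_univ_succ]
    have hp : ∏ i ∈ Finset.range (m + 2), (X - C (d i))
        = (∏ i ∈ Finset.range (m + 1), (X - C (d (i + 1)))) * (X - C (d 0)) := by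
      rw [Finset.prod_range_succ']
    have hq : ∀ k : Fin m, ∏ i ∈ Finset.range ((k.succ : Fin (m+1)) : ℕ), (X - C (d i))
        = (∏ i ∈ Finset.range (k : ℕ), (X - C (d (i + 1)))) * (X - C (d 0)) := by
      intro k
      rw [Fin.val_succ, Finset.prod_range_succ']
    have hs : (X - C (d 0)) * ∑ k : Fin m,
          C (b k.succ) * ∏ i ∈ Finset.range (k : ℕ), (X - C (d (i + 1)))
        = ∑ k : Fin m,
          C (b k.succ) * ∏ i ∈ Finset.range ((k.succ : Fin (m+1)) : ℕ), (X - C (d i)) := by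
      rw [Finset.mul_sum]
      exact Finset.sum_congr rfl fun k _ => by rw [hq k]; ring
    rw [hp, mul_sub, hs]
    simp only [Fin.val_zero, Finset.range_zero, Finset.prod_empty, mul_one]
    ring

end Det

section Alg
variable {F : Type*} [Field F]

lemma hfun_zero (d : ℕ → F) (k : ℕ) : hfun d 0 k = 1 := by rw [hfun]
lemma hfun_succ_zero (d : ℕ → F) (r : ℕ) : hfun d (r + 1) 0 = 0 := by rw [hfun]
lemma hfun_succ_succ (d : ℕ → F) (r k : ℕ) :
    hfun d (r + 1) (k + 1) = hfun d (r + 1) k + d k * hfun d r (k + 1) := by rw [hfun]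

lemma hfun_one (d : ℕ → F) (k : ℕ) : hfun d 1 k = ∑ i ∈ Finset.range k, d i := by
  induction k with
  | zero => simp [hfun_succ_zero]
  | succ k ih =>
    rw [show (1 : ℕ) = 0 + 1 from rfl, hfun_succ_succ, ← show (1 : ℕ) = 0 + 1 from rfl,
      ih, hfun_zero, Finset.sum_range_succ]
    ring

noncomputable def Hp (d : ℕ → F) (m k : ℕ) : F[X] :=
  ∑ j ∈ Finset.range (m + 1), C (hfun d (m - j) k) * X ^ j

lemma Hp_zero_right (d : ℕ → F) (k : ℕ) : Hp d 0 k = 1 := by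
  simp [Hp, hfun_zero]

lemma Hp_zero_left (d : ℕ → F) (m : ℕ) : Hp d m 0 = X ^ m := by
  rw [Hp, Finset.sum_range_succ]
  have h : ∀ j ∈ Finset.range m, C (hfun d (m - j) 0) * X ^ j = 0 := by
    intro j hj
    have hj' : j < m := Finset.mem_range.mp hj
    have : m - j = (m - j - 1) + 1 := by omega
    rw [this, hfun_succ_zero]; simp
  rw [Finset.sum_congr rfl h]
  simp [hfun_zero]

lemma Hp_X (d : ℕ → F) (m k : ℕ) :
    X * Hp d m k = Hp d (m + 1) k - C (hfun d (m + 1) k) := by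
  have h : Hp d (m + 1) k
      = (∑ j ∈ Finset.range (m + 1), C (hfun d (m - j) k) * X ^ (j + 1))
        + C (hfun d (m + 1) k) := by
    rw [Hp, Finset.sum_range_succ']
    simp [Nat.add_sub_add_right]
  rw [h, add_sub_cancel_right, Hp, Finset.mul_sum]
  exact Finset.sum_congr rfl fun j _ => by ring

lemma Hp_d (d : ℕ → F) (m k : ℕ) :
    C (d k) * Hp d m (k + 1) = Hp d (m + 1) (k + 1) - Hp d (m + 1) k := by
  have h1 : Hp d (m + 1) (k + 1) - Hp d (m + 1) k
      = ∑ j ∈ Finset.range (m + 2),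
          C (hfun d (m + 1 - j) (k + 1) - hfun d (m + 1 - j) k) * X ^ j := by
    rw [Hp, Hp, ← Finset.sum_sub_distrib]
    exact Finset.sum_congr rfl fun j _ => by rw [map_sub]; ring
  rw [h1, Finset.sum_range_succ]
  have h2 : hfun d (m + 1 - (m + 1)) (k + 1) - hfun d (m + 1 - (m + 1)) k = 0 := by
    simp [hfun_zero]
  rw [h2]
  simp only [map_zero, zero_mul, add_zero]
  rw [Hp, Finset.mul_sum]
  refine Finset.sum_congr rfl fun j hj => ?_
  have hj' : j < m + 1 := Finset.mem_range.mp hj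
  have h3 : m + 1 - j = (m - j) + 1 := by omega
  rw [h3, hfun_succ_succ, add_sub_cancel_left, map_mul]
  ring

lemma Hp_comb (d : ℕ → F) (m k : ℕ) :
    (X - C (d k)) * Hp d m (k + 1) = Hp d (m + 1) k - C (hfun d (m + 1) (k + 1)) := by
  rw [sub_mul, Hp_X, Hp_d]
  ring

noncomputable def Rp (c d : ℕ → F) (n k : ℕ) : F[X] :=
  ∑ i ∈ Finset.Icc k n, C (c i) * Hp d (i - k) k

lemma Rp_top (c d : ℕ → F) (n : ℕ) : Rp c d n n = C (c n) := by
  simp [Rp, Hp_zero_right]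

lemma Rp_step (c d : ℕ → F) (n k : ℕ) (hk : k ≤ n) :
    Rp c d n k = (X - C (d k)) * Rp c d n (k + 1)
      + C (∑ i ∈ Finset.Icc k n, c i * hfun d (i - k) (k + 1)) := by
  have hIcc : Finset.Icc k n = insert k (Finset.Icc (k + 1) n) := by
    ext x; simp only [Finset.mem_Icc, Finset.mem_insert]; omega
  have hknot : k ∉ Finset.Icc (k + 1) n := by simp
  have e1 : (X - C (d k)) * Rp c d n (k + 1)
      = (∑ i ∈ Finset.Icc (k + 1) n, C (c i) * Hp d (i - k) k)
        - ∑ i ∈ Finset.Icc (k + 1) n, C (c i * hfun d (i - k) (k + 1)) := by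
    rw [Rp, Finset.mul_sum, ← Finset.sum_sub_distrib]
    refine Finset.sum_congr rfl fun i hi => ?_
    have hi' : k + 1 ≤ i := (Finset.mem_Icc.mp hi).1
    have h2 : i - k = (i - (k + 1)) + 1 := by omega
    rw [h2, map_mul]
    linear_combination C (c i) * Hp_comb d (i - (k + 1)) k
  rw [e1, Rp, hIcc, Finset.sum_insert hknot, Finset.sum_insert hknot, map_add, map_sum]
  simp only [Nat.sub_self, Hp_zero_right, hfun_zero, mul_one, map_mul]
  ring

lemma Rp_unroll (c d : ℕ → F) (n : ℕ) :
    ∀ m, m ≤ n → Rp c d n (n - m)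
      = C (c n) * ∏ i ∈ Finset.Ico (n - m) n, (X - C (d i))
        + ∑ k ∈ Finset.Ico (n - m) n,
            C (∑ i ∈ Finset.Icc k n, c i * hfun d (i - k) (k + 1))
              * ∏ i ∈ Finset.Ico (n - m) k, (X - C (d i)) := by
  intro m
  induction m with
  | zero => intro _; simp [Rp_top]
  | succ m ih =>
    intro hm
    have ihm := ih (by omega)
    set k := n - (m + 1) with hkdef
    have hk1 : k + 1 = n - m := by omega
    have hkn : k < n := by omega
    have ihm' : Rp c d n (k + 1)
        = C (c n) * ∏ i ∈ Finset.Ico (k + 1) n, (X - C (d i))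
          + ∑ j ∈ Finset.Ico (k + 1) n,
              C (∑ i ∈ Finset.Icc j n, c i * hfun d (i - j) (j + 1))
                * ∏ i ∈ Finset.Ico (k + 1) j, (X - C (d i)) := by
      rw [hk1]; exact ihm
    rw [Rp_step c d n k (le_of_lt hkn), ihm']
    have hprod : ∏ i ∈ Finset.Ico k n, (X - C (d i))
        = (X - C (d k)) * ∏ i ∈ Finset.Ico (k + 1) n, (X - C (d i)) :=
      Finset.prod_eq_prod_Ico_succ_bot hkn _
    have hIco : Finset.Ico k n = insert k (Finset.Ico (k + 1) n) := by
      ext x; simp only [Finset.mem_Ico, Finset.mem_insert]; omega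
    have hknot : k ∉ Finset.Ico (k + 1) n := by simp
    have hsum : ∑ j ∈ Finset.Ico (k + 1) n,
          C (∑ i ∈ Finset.Icc j n, c i * hfun d (i - j) (j + 1))
            * ∏ i ∈ Finset.Ico k j, (X - C (d i))
        = (X - C (d k)) * ∑ j ∈ Finset.Ico (k + 1) n,
            C (∑ i ∈ Finset.Icc j n, c i * hfun d (i - j) (j + 1))
              * ∏ i ∈ Finset.Ico (k + 1) j, (X - C (d i)) := by
      rw [Finset.mul_sum]
      refine Finset.sum_congr rfl fun j hj => ?_
      have hj' : k < j := by
        have := Finset.mem_Ico.mp hj; omega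
      rw [Finset.prod_eq_prod_Ico_succ_bot hj']
      ring
    rw [hprod, hIco, Finset.sum_insert hknot, hsum]
    simp only [Finset.Ico_self, Finset.prod_empty, mul_one]
    ring

end Alg

theorem stmt4 {F : Type*} [Field F] (n : ℕ) (hn : 1 ≤ n)
    (c : ℕ → F) (hc : c n = 1) (d : ℕ → F)
    (hd : d (n - 1) = -c (n - 1) - ∑ i ∈ Finset.range (n - 1), d i)
    (b : Fin (n - 1) → F)
    (hb : ∀ k : Fin (n - 1),
      b k = -∑ i ∈ Finset.Icc (k : ℕ) n, c i * hfun d (i - (k : ℕ)) ((k : ℕ) + 1)) :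
    (matA n d b).charpoly = ∑ i ∈ Finset.range (n + 1), C (c i) * X ^ i := by
  obtain ⟨m, rfl⟩ : ∃ m, n = m + 1 := ⟨n - 1, by omega⟩
  have hRp : Rp c d (m + 1) 0 = ∑ i ∈ Finset.range (m + 1 + 1), C (c i) * X ^ i := by
    rw [Rp]
    have h : Finset.Icc 0 (m + 1) = Finset.range (m + 2) := by
      ext x; simp; omega
    rw [h]
    exact Finset.sum_congr rfl fun i _ => by rw [Nat.sub_zero, Hp_zero_left]
  have hR := Rp_unroll c d (m + 1) (m + 1) le_rfl
  rw [Nat.sub_self] at hR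
  simp only [← Finset.range_eq_Ico] at hR
  rw [hc, map_one, one_mul, Finset.sum_range_succ] at hR
  have hBlast : ∑ i ∈ Finset.Icc m (m + 1), c i * hfun d (i - m) (m + 1) = 0 := by
    have hpair : Finset.Icc m (m + 1) = {m, m + 1} := by ext x; simp; omega
    rw [hpair, Finset.sum_pair (by omega : m ≠ m + 1)]
    rw [Nat.sub_self, Nat.add_sub_cancel_left]
    rw [hfun_zero, hfun_one, hc, mul_one, one_mul, Finset.sum_range_succ]
    have hd' : d m = -c m - ∑ i ∈ Finset.range m, d i := by simpa using hd
    rw [hd']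
    ring
  rw [hBlast, map_zero, zero_mul, add_zero, Finset.sum_range] at hR
  rw [charpoly_matA m d b, ← hRp, hR]
  have hbb : ∑ k : Fin m, C (b k) * ∏ i ∈ Finset.range (k : ℕ), (X - C (d i))
      = - ∑ k : Fin m,
          C (∑ i ∈ Finset.Icc (k : ℕ) (m + 1), c i * hfun d (i - (k : ℕ)) ((k : ℕ) + 1))
            * ∏ i ∈ Finset.range (k : ℕ), (X - C (d i)) := by
    rw [← Finset.sum_neg_distrib]
    refine Finset.sum_congr rfl fun k _ => ?_
    rw [hb k, map_neg]
    ring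
  rw [hbb]
  ring
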